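/- Let (x_i, f_i) be a Schauder frame of a Banach space X and let Y denote the closed linear span of (f_i)_{i∈ℕ} in X*. Then the following are equivalent: (a) the frame is locally shrinking, and for every x** ∈ X**, sup{ |x**(f)| : f ∈ span(f_i : i ≥ n), ‖f‖ ≤ 1 } → 0 as n → ∞; (b) the frame is locally shrinking, locally boundedly complete and pre-boundedly complete; (c) the frame is locally shrinking and locally boundedly complete, and for every x** ∈ X** there exists x ∈ X such that g(x) = lim_{n→∞} g(Σ_{i=1}^n x**(f_i) x_i) for every g ∈ Y; (d) the frame is locally shrinking and locally boundedly complete, and the canonical map J : X → Y* defined by J(x)(f) = f(x) is an isomorphism of X onto Y*. -/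

import Mathlib

open Filter Topology

/-- `sup { |g z| : z ∈ span (x i : i ≥ n), ‖z‖ ≤ 1 }`. -/
noncomputable def tailSupX {X : Type*} [NormedAddCommGroup X] [NormedSpace ℝ X]
    (x : ℕ → X) (g : X →L[ℝ] ℝ) (n : ℕ) : ℝ :=
  sSup ((fun z : X => |g z|) ''
    {z | z ∈ Submodule.span ℝ (x '' {i | n ≤ i}) ∧ ‖z‖ ≤ 1})

/-- `sup { |g v| : g ∈ span (f i : i ≥ n), ‖g‖ ≤ 1 }`. -/
noncomputable def tailSupF {X : Type*} [NormedAddCommGroup X] [NormedSpace ℝ X]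
    (f : ℕ → X →L[ℝ] ℝ) (v : X) (n : ℕ) : ℝ :=
  sSup ((fun g : X →L[ℝ] ℝ => |g v|) ''
    {g | g ∈ Submodule.span ℝ (f '' {i | n ≤ i}) ∧ ‖g‖ ≤ 1})

/-- `sup { |F g| : g ∈ span (f i : i ≥ n), ‖g‖ ≤ 1 }`, for `F ∈ X**`. -/
noncomputable def tailSupBidual {X : Type*} [NormedAddCommGroup X] [NormedSpace ℝ X]
    (f : ℕ → X →L[ℝ] ℝ) (F : (X →L[ℝ] ℝ) →L[ℝ] ℝ) (n : ℕ) : ℝ :=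
  sSup ((fun g : X →L[ℝ] ℝ => |F g|) ''
    {g | g ∈ Submodule.span ℝ (f '' {i | n ≤ i}) ∧ ‖g‖ ≤ 1})

/-- Helper instance (port): the topology of bounded convergence on the dual of a subspace of `X*`,
which instance search no longer finds by itself (it is `ContinuousLinearMap.topologicalSpace`). -/
noncomputable instance instTopologicalSpaceDualOfSubmoduleDual {X : Type*} [NormedAddCommGroup X]
    [NormedSpace ℝ X] (S : Submodule ℝ (X →L[ℝ] ℝ)) : TopologicalSpace (↥S →L[ℝ] ℝ) :=
  @ContinuousLinearMap.topologicalSpace ℝ ℝ _ _ (RingHom.id ℝ) S ℝ _ _ _ _ _ _ _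


noncomputable instance instNormedAddCommGroupDualOfSubmoduleDual {X : Type*}
    [NormedAddCommGroup X] [NormedSpace ℝ X] (S : Submodule ℝ (X →L[ℝ] ℝ)) :
    NormedAddCommGroup (↥S →L[ℝ] ℝ) :=
  ContinuousLinearMap.toNormedAddCommGroup (𝕜 := ℝ) (𝕜₂ := ℝ) (E := ↥S) (F := ℝ)
    (σ₁₂ := RingHom.id ℝ)

noncomputable instance instNormedSpaceDualOfSubmoduleDual {X : Type*}
    [NormedAddCommGroup X] [NormedSpace ℝ X] (S : Submodule ℝ (X →L[ℝ] ℝ)) :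
    NormedSpace ℝ (↥S →L[ℝ] ℝ) :=
  ContinuousLinearMap.toNormedSpace (𝕜 := ℝ) (𝕜₂ := ℝ) (E := ↥S) (F := ℝ)
    (σ₁₂ := RingHom.id ℝ)

noncomputable instance instCompleteSpaceDualOfSubmoduleDual {X : Type*}
    [NormedAddCommGroup X] [NormedSpace ℝ X] (S : Submodule ℝ (X →L[ℝ] ℝ)) :
    CompleteSpace (↥S →L[ℝ] ℝ) :=
  ContinuousLinearMap.instCompleteSpace (𝕜₁ := ℝ) (𝕜₂ := ℝ) (σ := RingHom.id ℝ) (E := ↥S)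
    (F := ℝ)

section
variable {E : Type*} [NormedAddCommGroup E] [NormedSpace ℝ E]

noncomputable def ballSup (Φ : E →L[ℝ] ℝ) (p : Submodule ℝ E) : ℝ :=
  sSup ((fun a : E => |Φ a|) '' {a | a ∈ p ∧ ‖a‖ ≤ 1})

lemma ballSup_bddAbove (Φ : E →L[ℝ] ℝ) (p : Submodule ℝ E) :
    BddAbove ((fun a : E => |Φ a|) '' {a | a ∈ p ∧ ‖a‖ ≤ 1}) := by
  refine ⟨‖Φ‖, ?_⟩
  rintro r ⟨a, ⟨-, ha1⟩, rfl⟩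
  calc |Φ a| ≤ ‖Φ‖ * ‖a‖ := Φ.le_opNorm a
  _ ≤ ‖Φ‖ * 1 := by gcongr
  _ = ‖Φ‖ := mul_one _

lemma le_ballSup {Φ : E →L[ℝ] ℝ} {p : Submodule ℝ E} {a : E} (h : a ∈ p) (h1 : ‖a‖ ≤ 1) :
    |Φ a| ≤ ballSup Φ p :=
  le_csSup (ballSup_bddAbove Φ p) ⟨a, ⟨h, h1⟩, rfl⟩

lemma ballSup_nonneg (Φ : E →L[ℝ] ℝ) (p : Submodule ℝ E) : 0 ≤ ballSup Φ p := by
  simpa using le_ballSup (Φ := Φ) p.zero_mem (by simp)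

lemma ballSup_le {Φ : E →L[ℝ] ℝ} {p : Submodule ℝ E} {M : ℝ} (hM : 0 ≤ M)
    (h : ∀ a ∈ p, ‖a‖ ≤ 1 → |Φ a| ≤ M) : ballSup Φ p ≤ M := by
  refine Real.sSup_le ?_ hM
  rintro r ⟨a, ⟨ha, ha1⟩, rfl⟩
  exact h a ha ha1

lemma abs_le_ballSup_mul {Φ : E →L[ℝ] ℝ} {p : Submodule ℝ E} {a : E} (h : a ∈ p) :
    |Φ a| ≤ ballSup Φ p * ‖a‖ := by
  rcases eq_or_ne a 0 with rfl | ha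
  · simp
  · have hn : (0:ℝ) < ‖a‖ := norm_pos_iff.mpr ha
    have := le_ballSup (Φ := Φ) (p.smul_mem (‖a‖⁻¹) h)
      (by rw [norm_smul]; simp [abs_of_nonneg, hn.le, inv_mul_cancel₀ hn.ne'])
    rw [map_smul] at this
    simp only [smul_eq_mul, abs_mul, abs_inv, abs_norm] at this
    calc |Φ a| = (‖a‖⁻¹ * |Φ a|) * ‖a‖ := by field_simp
    _ ≤ ballSup Φ p * ‖a‖ := by gcongr
end
section
variable {X : Type*} [NormedAddCommGroup X] [NormedSpace ℝ X]

noncomputable def frameT (x : ℕ → X) (f : ℕ → X →L[ℝ] ℝ) (n : ℕ) : X →L[ℝ] X :=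
  ∑ i ∈ Finset.range n, (f i).smulRight (x i)

lemma frameT_apply (x : ℕ → X) (f : ℕ → X →L[ℝ] ℝ) (n : ℕ) (v : X) :
    frameT x f n v = ∑ i ∈ Finset.range n, f i v • x i := by
  simp [frameT]

lemma comp_frameT (x : ℕ → X) (f : ℕ → X →L[ℝ] ℝ) (g : X →L[ℝ] ℝ) (n : ℕ) :
    g.comp (frameT x f n) = ∑ i ∈ Finset.range n, g (x i) • f i := by
  ext v
  simp [frameT_apply, mul_comm]

lemma exists_frame_bound [CompleteSpace X] (x : ℕ → X) (f : ℕ → X →L[ℝ] ℝ)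
    (hframe : ∀ v : X,
      Tendsto (fun n => ∑ i ∈ Finset.range n, f i v • x i) atTop (𝓝 v)) :
    ∃ C : ℝ, 0 ≤ C ∧ ∀ n, ‖frameT x f n‖ ≤ C := by
  have h : ∀ v : X, ∃ C, ∀ n, ‖frameT x f n v‖ ≤ C := by
    intro v
    have hb : BddAbove (Set.range fun n => ‖frameT x f n v‖) := by
      refine Filter.Tendsto.bddAbove_range (a := ‖v‖) ?_
      have : Tendsto (fun n => frameT x f n v) atTop (𝓝 v) := by
        simpa [frameT_apply] using hframe v
      exact this.norm
    obtain ⟨C, hC⟩ := hb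
    exact ⟨C, fun n => hC ⟨n, rfl⟩⟩
  obtain ⟨C, hC⟩ := banach_steinhaus h
  exact ⟨max C 0, le_max_right _ _, fun n => (hC n).trans (le_max_left _ _)⟩
end

section
variable {X : Type*} [NormedAddCommGroup X] [NormedSpace ℝ X]

lemma tailSupX_eq (x : ℕ → X) (g : X →L[ℝ] ℝ) (n : ℕ) :
    tailSupX x g n = ballSup g (Submodule.span ℝ (x '' {i | n ≤ i})) := rfl

lemma tailSupBidual_eq (f : ℕ → X →L[ℝ] ℝ) (F : (X →L[ℝ] ℝ) →L[ℝ] ℝ) (n : ℕ) :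
    tailSupBidual f F n = ballSup F (Submodule.span ℝ (f '' {i | n ≤ i})) := rfl

lemma tailSupF_eq (f : ℕ → X →L[ℝ] ℝ) (v : X) (n : ℕ) :
    tailSupF f v n
      = ballSup (NormedSpace.inclusionInDoubleDual ℝ X v)
        (Submodule.span ℝ (f '' {i | n ≤ i})) := by
  rfl

/-- Key lemma: if the frame is locally shrinking, then `g ∘ T_n → g` in norm for every
`g` in the closed span of the `f i`. -/
lemma comp_frameT_tendsto [CompleteSpace X] (x : ℕ → X) (f : ℕ → X →L[ℝ] ℝ)
    (hframe : ∀ v : X,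
      Tendsto (fun n => ∑ i ∈ Finset.range n, f i v • x i) atTop (𝓝 v))
    (hshr : ∀ m : ℕ, Tendsto (tailSupX x (f m)) atTop (𝓝 0))
    {g : X →L[ℝ] ℝ} (hg : g ∈ (Submodule.span ℝ (Set.range f)).topologicalClosure) :
    Tendsto (fun n => g.comp (frameT x f n)) atTop (𝓝 g) := by
  obtain ⟨C, hC0, hC⟩ := exists_frame_bound x f hframe
  -- Step A : the case g = f m
  have stepA : ∀ m : ℕ, Tendsto (fun n => (f m).comp (frameT x f n)) atTop (𝓝 (f m)) := by
    intro m
    have key : ∀ n (z : X), |f m (z - frameT x f n z)| ≤ tailSupX x (f m) n * (2 * C * ‖z‖) := by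
      intro n z
      have h1 : Tendsto (fun k => f m (frameT x f k z - frameT x f n z)) atTop
          (𝓝 (f m (z - frameT x f n z))) := by
        refine ((f m).continuous.tendsto _).comp ?_
        have : Tendsto (fun k => frameT x f k z) atTop (𝓝 z) := by
          simpa [frameT_apply] using hframe z
        exact this.sub_const _
      refine le_of_tendsto h1.abs ?_
      filter_upwards [eventually_ge_atTop n] with k hk
      have hmem : frameT x f k z - frameT x f n z
          ∈ Submodule.span ℝ (x '' {i | n ≤ i}) := by
        rw [frameT_apply, frameT_apply, ← Finset.sum_Ico_eq_sub _ hk]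
        refine Submodule.sum_mem _ fun i hi => Submodule.smul_mem _ _ ?_
        exact Submodule.subset_span ⟨i, (Finset.mem_Ico.mp hi).1, rfl⟩
      have hnorm : ‖frameT x f k z - frameT x f n z‖ ≤ 2 * C * ‖z‖ := by
        calc ‖frameT x f k z - frameT x f n z‖
            ≤ ‖frameT x f k z‖ + ‖frameT x f n z‖ := norm_sub_le _ _
        _ ≤ C * ‖z‖ + C * ‖z‖ :=
            add_le_add ((frameT x f k).le_of_opNorm_le (hC k) z)
              ((frameT x f n).le_of_opNorm_le (hC n) z)
        _ = 2 * C * ‖z‖ := by ring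
      calc |f m (frameT x f k z - frameT x f n z)|
          ≤ ballSup (f m) (Submodule.span ℝ (x '' {i | n ≤ i}))
              * ‖frameT x f k z - frameT x f n z‖ := abs_le_ballSup_mul hmem
      _ ≤ tailSupX x (f m) n * (2 * C * ‖z‖) := by
          rw [tailSupX_eq]
          have h0 : 0 ≤ ballSup (f m) (Submodule.span ℝ (x '' {i | n ≤ i})) :=
            ballSup_nonneg _ _
          exact mul_le_mul_of_nonneg_left hnorm h0
    have hnle : ∀ n, ‖(f m).comp (frameT x f n) - f m‖ ≤ 2 * C * tailSupX x (f m) n := by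
      intro n
      refine ContinuousLinearMap.opNorm_le_bound _
        (mul_nonneg (by positivity)
          (by rw [tailSupX_eq]; exact ballSup_nonneg _ _)) fun z => ?_
      have := key n z
      have heq : ((f m).comp (frameT x f n) - f m) z = -(f m (z - frameT x f n z)) := by
        simp [map_sub, neg_sub]
      rw [heq, norm_neg]
      calc ‖f m (z - frameT x f n z)‖ = |f m (z - frameT x f n z)| := rfl
      _ ≤ tailSupX x (f m) n * (2 * C * ‖z‖) := this
      _ = 2 * C * tailSupX x (f m) n * ‖z‖ := by ring
    rw [tendsto_iff_norm_sub_tendsto_zero]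
    refine squeeze_zero (fun n => norm_nonneg _) hnle ?_
    simpa using (hshr m).const_mul (2 * C)
  -- Step B : g in the span
  have stepB : ∀ g ∈ Submodule.span ℝ (Set.range f),
      Tendsto (fun n => g.comp (frameT x f n)) atTop (𝓝 g) := by
    intro g hg
    induction hg using Submodule.span_induction with
    | mem g hg =>
        obtain ⟨m, rfl⟩ := hg
        exact stepA m
    | zero => simpa using tendsto_const_nhds
    | add g h _ _ hgt hht => simpa [ContinuousLinearMap.add_comp] using hgt.add hht
    | smul c g _ hgt => simpa [ContinuousLinearMap.smul_comp] using hgt.const_smul c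
  -- Step C : closure
  rw [Metric.tendsto_atTop]
  intro ε hε
  have hC1 : (0:ℝ) < C + 1 := by linarith
  have hδ : (0:ℝ) < ε / (2 * (C + 1)) := by positivity
  obtain ⟨g', hg'mem, hg'close⟩ :=
    Metric.mem_closure_iff.mp (show g ∈ closure (Submodule.span ℝ (Set.range f) : Set (X →L[ℝ] ℝ)) by rw [← Submodule.topologicalClosure_coe]; exact hg) _ hδ
  obtain ⟨N, hN⟩ := (Metric.tendsto_atTop.mp (stepB g' hg'mem)) (ε / 2) (by positivity)
  refine ⟨N, fun n hn => ?_⟩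
  have h1 : ‖(g - g').comp (frameT x f n)‖ ≤ ‖g - g'‖ * C :=
    ((g - g').opNorm_comp_le _).trans
      (mul_le_mul_of_nonneg_left (hC n) (norm_nonneg _))
  have h2 : ‖g'.comp (frameT x f n) - g'‖ < ε / 2 := by
    simpa [dist_eq_norm] using hN n hn
  have hgg' : ‖g - g'‖ < ε / (2 * (C + 1)) := by
    simpa [dist_eq_norm] using hg'close
  have key : g.comp (frameT x f n) - g
      = (g - g').comp (frameT x f n) + (g'.comp (frameT x f n) - g') + (g' - g) := by
    simp only [ContinuousLinearMap.sub_comp]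
    abel
  rw [dist_eq_norm, key]
  calc ‖(g - g').comp (frameT x f n) + (g'.comp (frameT x f n) - g') + (g' - g)‖
      ≤ ‖(g - g').comp (frameT x f n)‖ + ‖g'.comp (frameT x f n) - g'‖ + ‖g' - g‖ :=
        norm_add₃_le
  _ ≤ ‖g - g'‖ * C + ‖g'.comp (frameT x f n) - g'‖ + ‖g - g'‖ := by
        rw [norm_sub_rev g' g]; gcongr
  _ = ‖g - g'‖ * (C + 1) + ‖g'.comp (frameT x f n) - g'‖ := by ring
  _ < (ε / (2 * (C + 1))) * (C + 1) + ε / 2 := by gcongr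
  _ = ε := by field_simp; ring
end

section
variable {X : Type*} [NormedAddCommGroup X] [NormedSpace ℝ X]

/-- If the frame is locally boundedly complete, then `tailSupF f v → 0` for every `v`. -/
lemma tailSupF_tendsto_zero (x : ℕ → X) (f : ℕ → X →L[ℝ] ℝ)
    (hframe : ∀ v : X,
      Tendsto (fun n => ∑ i ∈ Finset.range n, f i v • x i) atTop (𝓝 v))
    (hlbc : ∀ m : ℕ, Tendsto (tailSupF f (x m)) atTop (𝓝 0)) (v : X) :
    Tendsto (tailSupF f v) atTop (𝓝 0) := by
  have hnn : ∀ (w : X) (n : ℕ), 0 ≤ tailSupF f w n := fun w n => by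
    rw [tailSupF_eq]; exact ballSup_nonneg _ _
  rw [Metric.tendsto_atTop]
  intro ε hε
  obtain ⟨k, hk⟩ := (Metric.tendsto_atTop.mp (hframe v)) (ε / 2) (by positivity)
  set w : X := ∑ i ∈ Finset.range k, f i v • x i with hw
  have hwv : ‖v - w‖ < ε / 2 := by
    have := hk k le_rfl
    rw [dist_eq_norm] at this
    rw [norm_sub_rev]
    exact this
  have h1 : Tendsto (fun n => ∑ i ∈ Finset.range k, |f i v| * tailSupF f (x i) n)
      atTop (𝓝 0) := by
    have := tendsto_finset_sum (Finset.range k)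
      (fun i _ => ((hlbc i).const_mul |f i v| : Tendsto (fun n => |f i v| * tailSupF f (x i) n) atTop (𝓝 (|f i v| * 0))))
    simpa using this
  obtain ⟨N, hN⟩ := (Metric.tendsto_atTop.mp h1) (ε / 2) (by positivity)
  refine ⟨N, fun n hn => ?_⟩
  have key1 : tailSupF f v n ≤ tailSupF f w n + ‖v - w‖ := by
    rw [tailSupF_eq]
    refine ballSup_le (add_nonneg (hnn w n) (norm_nonneg _)) fun g hg hg1 => ?_
    have : |g v| ≤ |g w| + |g (v - w)| := by
      have : g v = g w + g (v - w) := by rw [map_sub]; ring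
      rw [this]; exact abs_add_le _ _
    rw [NormedSpace.dual_def]
    refine this.trans (add_le_add ?_ ?_)
    · rw [tailSupF_eq]
      have := le_ballSup (Φ := NormedSpace.inclusionInDoubleDual ℝ X w) hg hg1
      simpa [NormedSpace.dual_def] using this
    · calc |g (v - w)| ≤ ‖g‖ * ‖v - w‖ := g.le_opNorm _
      _ ≤ 1 * ‖v - w‖ := mul_le_mul_of_nonneg_right hg1 (norm_nonneg _)
      _ = ‖v - w‖ := one_mul _
  have key2 : tailSupF f w n ≤ ∑ i ∈ Finset.range k, |f i v| * tailSupF f (x i) n := by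
    rw [tailSupF_eq]
    refine ballSup_le (Finset.sum_nonneg fun i _ =>
      mul_nonneg (abs_nonneg _) (hnn (x i) n)) fun g hg hg1 => ?_
    rw [NormedSpace.dual_def]
    have : g w = ∑ i ∈ Finset.range k, f i v * g (x i) := by
      rw [hw, map_sum]; simp
    rw [this]
    calc |∑ i ∈ Finset.range k, f i v * g (x i)|
        ≤ ∑ i ∈ Finset.range k, |f i v * g (x i)| := Finset.abs_sum_le_sum_abs _ _
    _ ≤ ∑ i ∈ Finset.range k, |f i v| * tailSupF f (x i) n := by
        refine Finset.sum_le_sum fun i _ => ?_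
        rw [abs_mul]
        refine mul_le_mul_of_nonneg_left ?_ (abs_nonneg _)
        rw [tailSupF_eq]
        have := le_ballSup (Φ := NormedSpace.inclusionInDoubleDual ℝ X (x i)) hg hg1
        simpa [NormedSpace.dual_def] using this
  have hsum : ∑ i ∈ Finset.range k, |f i v| * tailSupF f (x i) n < ε / 2 := by
    have := hN n hn
    rw [Real.dist_eq, sub_zero] at this
    calc ∑ i ∈ Finset.range k, |f i v| * tailSupF f (x i) n
        ≤ |∑ i ∈ Finset.range k, |f i v| * tailSupF f (x i) n| := le_abs_self _
    _ < ε / 2 := this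
  rw [Real.dist_eq, sub_zero, abs_of_nonneg (hnn v n)]
  calc tailSupF f v n ≤ tailSupF f w n + ‖v - w‖ := key1
  _ < ε / 2 + ε / 2 := add_lt_add_of_le_of_lt (key2.trans hsum.le) hwv
  _ = ε := by ring
end

section
variable {X : Type*} [NormedAddCommGroup X] [NormedSpace ℝ X]

noncomputable def frameJ (Y : Submodule ℝ (X →L[ℝ] ℝ)) : X →L[ℝ] (↥Y →L[ℝ] ℝ) :=
  LinearMap.mkContinuous (E := X) (F := ↥Y →L[ℝ] ℝ)
    { toFun := fun v => (NormedSpace.inclusionInDoubleDual ℝ X v).comp Y.subtypeL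
      map_add' := fun v w => by ext g; simp
      map_smul' := fun c v => by ext g; simp } 1
    (by
      intro v
      refine ContinuousLinearMap.opNorm_le_bound _ (by positivity) fun g => ?_
      calc ‖(NormedSpace.inclusionInDoubleDual ℝ X v).comp Y.subtypeL g‖
          = ‖(g : X →L[ℝ] ℝ) v‖ := by simp [NormedSpace.dual_def]
      _ ≤ ‖(g : X →L[ℝ] ℝ)‖ * ‖v‖ := (g : X →L[ℝ] ℝ).le_opNorm v
      _ = 1 * ‖v‖ * ‖g‖ := by rw [one_mul]; rw [mul_comm]; rfl)

lemma frameJ_apply (Y : Submodule ℝ (X →L[ℝ] ℝ)) (v : X) (g : ↥Y) :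
    frameJ Y v g = (g : X →L[ℝ] ℝ) v := by
  simp [frameJ, NormedSpace.dual_def]

set_option synthInstance.maxHeartbeats 1000000 in
set_option maxHeartbeats 4000000 in
noncomputable def frameE [CompleteSpace X] (Y : Submodule ℝ (X →L[ℝ] ℝ))
    (hker : (frameJ Y).ker = ⊥) (hrange : (frameJ Y).range = ⊤) :
    X ≃L[ℝ] (↥Y →L[ℝ] ℝ) := by
  have e0 := ContinuousLinearEquiv.ofBijective (𝕜 := ℝ) (𝕜' := ℝ) (σ := RingHom.id ℝ)
    (σ' := RingHom.id ℝ) (E := X) (F := ↥Y →L[ℝ] ℝ) (frameJ Y) hker hrange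
  exact e0

lemma frameE_apply [CompleteSpace X] (Y : Submodule ℝ (X →L[ℝ] ℝ))
    (hker : (frameJ Y).ker = ⊥) (hrange : (frameJ Y).range = ⊤)
    (v : X) (g : ↥Y) : frameE Y hker hrange v g = (g : X →L[ℝ] ℝ) v :=
  frameJ_apply Y v g
end



set_option synthInstance.maxHeartbeats 1000000 in
set_option maxHeartbeats 1000000 in
/-- Let `(x i, f i)` be a Schauder frame of a Banach space `X` and let
`Y` be the closed linear span of `(f i)` in `X*`. TFAE:
(a) locally shrinking and `‖x**|span(f i : i ≥ n)‖ → 0` for every `x** ∈ X**`;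
(b) locally shrinking, locally boundedly complete and pre-boundedly complete;
(c) locally shrinking, locally boundedly complete, and for every `x** ∈ X**` there is
`x ∈ X` with `g x = lim_n g (∑_{i<n} x**(f i) • x i)` for all `g ∈ Y`;
(d) locally shrinking, locally boundedly complete, and the canonical map `J : X → Y*`,
`J x g = g x`, is an isomorphism of `X` onto `Y*`. -/
theorem schauderFrame_boundedlyComplete_tfae
    {X : Type*} [NormedAddCommGroup X] [NormedSpace ℝ X] [CompleteSpace X]
    (x : ℕ → X) (f : ℕ → X →L[ℝ] ℝ)
    (hx : ∀ i, x i ≠ 0) (hf : ∀ i, f i ≠ 0)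
    (hframe : ∀ v : X,
      Tendsto (fun n => ∑ i ∈ Finset.range n, f i v • x i) atTop (𝓝 v)) :
    List.TFAE
      [ ((∀ m : ℕ, Tendsto (tailSupX x (f m)) atTop (𝓝 0)) ∧
          ∀ F : (X →L[ℝ] ℝ) →L[ℝ] ℝ, Tendsto (tailSupBidual f F) atTop (𝓝 0)),
        ((∀ m : ℕ, Tendsto (tailSupX x (f m)) atTop (𝓝 0)) ∧
          (∀ m : ℕ, Tendsto (tailSupF f (x m)) atTop (𝓝 0)) ∧
          ∀ F : (X →L[ℝ] ℝ) →L[ℝ] ℝ, ∃ v : X,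
            Tendsto (fun n => ∑ i ∈ Finset.range n, F (f i) • x i) atTop (𝓝 v)),
        ((∀ m : ℕ, Tendsto (tailSupX x (f m)) atTop (𝓝 0)) ∧
          (∀ m : ℕ, Tendsto (tailSupF f (x m)) atTop (𝓝 0)) ∧
          ∀ F : (X →L[ℝ] ℝ) →L[ℝ] ℝ, ∃ v : X,
            ∀ g ∈ (Submodule.span ℝ (Set.range f)).topologicalClosure,
              Tendsto (fun n => g (∑ i ∈ Finset.range n, F (f i) • x i)) atTop
                (𝓝 (g v))),
        ((∀ m : ℕ, Tendsto (tailSupX x (f m)) atTop (𝓝 0)) ∧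
          (∀ m : ℕ, Tendsto (tailSupF f (x m)) atTop (𝓝 0)) ∧
          ∃ e : X ≃L[ℝ]
              (↥((Submodule.span ℝ (Set.range f)).topologicalClosure) →L[ℝ] ℝ),
            ∀ (v : X) (g : ↥((Submodule.span ℝ (Set.range f)).topologicalClosure)),
              e v g = (g : X →L[ℝ] ℝ) v) ] := by

  set Y := (Submodule.span ℝ (Set.range f)).topologicalClosure with hY
  have hYtail : ∀ n, Submodule.span ℝ (f '' {i | n ≤ i}) ≤ Y := fun n =>
    le_trans (Submodule.span_mono (by rintro g ⟨i, -, rfl⟩; exact ⟨i, rfl⟩))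
      (Submodule.le_topologicalClosure _)
  obtain ⟨C, hC0, hC⟩ := exists_frame_bound x f hframe
  tfae_have 1 → 2 := by
    rintro ⟨hshr, hbid⟩
    refine ⟨hshr, fun m => ?_, fun F => ?_⟩
    · have heq : tailSupF f (x m)
          = tailSupBidual f (NormedSpace.inclusionInDoubleDual ℝ X (x m)) :=
        funext fun n => (tailSupF_eq f (x m) n).trans (tailSupBidual_eq f _ n).symm
      rw [heq]
      exact hbid _
    · set S : ℕ → X := fun n => ∑ i ∈ Finset.range n, F (f i) • x i with hS
      have key : ∀ N n m : ℕ, N ≤ n → n ≤ m →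
          ‖S m - S n‖ ≤ 2 * C * tailSupBidual f F N := by
        intro N n m hNn hnm
        have htail0 : 0 ≤ tailSupBidual f F N := by
          rw [tailSupBidual_eq]; exact ballSup_nonneg _ _
        refine NormedSpace.norm_le_dual_bound ℝ _ (by positivity) fun h => ?_
        set g : X →L[ℝ] ℝ := ∑ i ∈ Finset.Ico n m, h (x i) • f i with hg
        have hmem : g ∈ Submodule.span ℝ (f '' {i | N ≤ i}) := by
          refine Submodule.sum_mem _ fun i hi => Submodule.smul_mem _ _ ?_
          exact Submodule.subset_span ⟨i, hNn.trans (Finset.mem_Ico.mp hi).1, rfl⟩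
        have hgeq : g = h.comp (frameT x f m) - h.comp (frameT x f n) := by
          rw [comp_frameT, comp_frameT, hg, Finset.sum_Ico_eq_sub _ hnm]
        have hgnorm : ‖g‖ ≤ 2 * C * ‖h‖ := by
          rw [hgeq]
          calc ‖h.comp (frameT x f m) - h.comp (frameT x f n)‖
              ≤ ‖h.comp (frameT x f m)‖ + ‖h.comp (frameT x f n)‖ := norm_sub_le _ _
          _ ≤ ‖h‖ * C + ‖h‖ * C :=
              add_le_add
                ((h.opNorm_comp_le _).trans
                  (mul_le_mul_of_nonneg_left (hC m) (norm_nonneg _)))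
                ((h.opNorm_comp_le _).trans
                  (mul_le_mul_of_nonneg_left (hC n) (norm_nonneg _)))
          _ = 2 * C * ‖h‖ := by ring
        have hhS : h (S m - S n) = F g := by
          have hSdiff : S m - S n = ∑ i ∈ Finset.Ico n m, F (f i) • x i := by
            rw [hS]; exact (Finset.sum_Ico_eq_sub _ hnm).symm
          rw [hSdiff, hg, map_sum, map_sum]
          simp [mul_comm]
        calc ‖h (S m - S n)‖ = |F g| := by rw [hhS]; rfl
        _ ≤ tailSupBidual f F N * ‖g‖ := by
            rw [tailSupBidual_eq]; exact abs_le_ballSup_mul hmem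
        _ ≤ tailSupBidual f F N * (2 * C * ‖h‖) :=
            mul_le_mul_of_nonneg_left hgnorm htail0
        _ = 2 * C * tailSupBidual f F N * ‖h‖ := by ring
      have hcauchy : CauchySeq S := by
        refine cauchySeq_of_le_tendsto_0 (fun N => 2 * C * tailSupBidual f F N)
          (fun n m N hn hm => ?_) ?_
        · rcases le_total n m with h | h
          · rw [dist_eq_norm, norm_sub_rev]
            exact key N n m hn h
          · rw [dist_eq_norm]
            exact key N m n hm h
        · simpa using (hbid F).const_mul (2 * C)
      exact cauchySeq_tendsto_of_complete hcauchy
  tfae_have 2 → 3 := by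
    rintro ⟨h1, h2, h3⟩
    refine ⟨h1, h2, fun F => ?_⟩
    obtain ⟨v, hv⟩ := h3 F
    exact ⟨v, fun g hg => ((g.continuous.tendsto v).comp hv)⟩
  tfae_have 3 → 4 := by
    rintro ⟨h1, h2, h3⟩
    refine ⟨h1, h2, ?_⟩
    have hfY : ∀ i, f i ∈ Y := fun i =>
      Submodule.le_topologicalClosure _ (Submodule.subset_span ⟨i, rfl⟩)
    have hker : (frameJ Y).ker = ⊥ := by
      rw [LinearMap.ker_eq_bot']
      intro v hv
      have hfi : ∀ i, f i v = 0 := fun i => by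
        have := congrArg (fun (φ : ↥Y →L[ℝ] ℝ) => φ ⟨f i, hfY i⟩) hv
        simpa [frameJ_apply] using this
      have : Tendsto (fun n => ∑ i ∈ Finset.range n, f i v • x i) atTop (𝓝 0) := by
        simpa [hfi] using (tendsto_const_nhds :
          Tendsto (fun _ : ℕ => (0 : X)) atTop (𝓝 0))
      exact tendsto_nhds_unique (hframe v) this
    have hrange : (frameJ Y).range = ⊤ := by
      rw [LinearMap.range_eq_top]
      intro φ
      obtain ⟨F, hFext, -⟩ := exists_extension_norm_eq (Y : Subspace ℝ (X →L[ℝ] ℝ)) φ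
      obtain ⟨v, hv⟩ := h3 F
      refine ⟨v, ?_⟩
      have hlim : ∀ (g : X →L[ℝ] ℝ), g ∈ Y → (g : X →L[ℝ] ℝ) v = F g := by
        intro g hg
        have hA := hv g hg
        have hB : Tendsto (fun n => g (∑ i ∈ Finset.range n, F (f i) • x i)) atTop
            (𝓝 (F g)) := by
          have hcomp : ∀ n, g (∑ i ∈ Finset.range n, F (f i) • x i)
              = F (g.comp (frameT x f n)) := by
            intro n
            rw [comp_frameT, map_sum, map_sum]
            simp [mul_comm]
          have := (F.continuous.tendsto g).comp
            (comp_frameT_tendsto x f hframe h1 hg)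
          simpa [hcomp, Function.comp_def] using this
        exact tendsto_nhds_unique hA hB
      ext g
      rw [ContinuousLinearMap.coe_coe, frameJ_apply]
      rw [hlim g g.2]
      exact hFext g
    exact ⟨frameE Y hker hrange, frameE_apply Y hker hrange⟩
  tfae_have 4 → 1 := by
    rintro ⟨h1, h2, e, he⟩
    refine ⟨h1, fun F => ?_⟩
    set φ : ↥Y →L[ℝ] ℝ := F.comp Y.subtypeL with hφ
    set v : X := e.symm φ with hv
    have hgv : ∀ g : ↥Y, (g : X →L[ℝ] ℝ) v = F g := by
      intro g
      rw [← he v g, hv, e.apply_symm_apply]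
      rfl
    have heq : tailSupBidual f F = tailSupF f v := by
      funext n
      unfold tailSupBidual tailSupF
      congr 1
      refine Set.image_congr ?_
      rintro g ⟨hg, -⟩
      rw [← hgv ⟨g, hYtail n hg⟩]
    rw [heq]
    exact tailSupF_tendsto_zero x f hframe h2 v
  tfae_finish
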